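/- Let (A(t))_{t∈ℕ} be a sequence of n×n nonnegative real matrices, each having a positive diagonal. Then there exists a strictly increasing sequence of natural numbers 0 < t_0 < t_1 < t_2 < ... such that for every i ∈ ℕ the forward accumulation A(t_i, t_{i+1}) := A(t_i)·A(t_i+1)···A(t_{i+1}-1) has the same zero pattern as the forward accumulation A(t_0, t_1); that is, for all indices a, b: (A(t_i, t_{i+1}))_{ab} > 0 if and only if (A(t_0, t_1))_{ab} > 0. -/

import Mathlib

open Matrix

/-- Forward accumulation `A(s,t) = A(s) * A(s+1) * ⋯ * A(t-1)`
(with `fwdAcc A s s` the identity matrix). -/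
def fwdAcc {n : ℕ} (A : ℕ → Matrix (Fin n) (Fin n) ℝ) (s t : ℕ) :
    Matrix (Fin n) (Fin n) ℝ :=
  ((List.range' s (t - s)).map A).prod

section aux

variable {n : ℕ} (A : ℕ → Matrix (Fin n) (Fin n) ℝ)

lemma fwdAcc_self (s : ℕ) : fwdAcc A s s = 1 := by
  simp [fwdAcc]

lemma fwdAcc_mul {s u t : ℕ} (h1 : s ≤ u) (h2 : u ≤ t) :
    fwdAcc A s t = fwdAcc A s u * fwdAcc A u t := by
  unfold fwdAcc
  rw [← List.prod_append, ← List.map_append]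
  congr 1
  have := @List.range'_append s (u - s) (t - u) 1
  rw [one_mul] at this
  rw [show s + (u - s) = u by omega] at this
  rw [show u - s + (t - u) = t - s by omega] at this
  rw [this]

lemma fwdAcc_succ {s t : ℕ} (h : s ≤ t) :
    fwdAcc A s (t + 1) = fwdAcc A s t * A t := by
  rw [fwdAcc_mul A h (Nat.le_succ t)]
  congr 1
  simp [fwdAcc]

variable (hnonneg : ∀ t i j, 0 ≤ A t i j) (hdiag : ∀ t i, 0 < A t i i)

lemma mul_entry_pos {B C : Matrix (Fin n) (Fin n) ℝ}
    (hB : ∀ a b, 0 ≤ B a b) (hC : ∀ a b, 0 ≤ C a b) {a k b : Fin n}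
    (h1 : 0 < B a k) (h2 : 0 < C k b) : 0 < (B * C) a b := by
  rw [Matrix.mul_apply]
  exact Finset.sum_pos' (fun i _ => mul_nonneg (hB a i) (hC i b))
    ⟨k, Finset.mem_univ k, mul_pos h1 h2⟩

include hnonneg hdiag in
lemma fwdAcc_nonneg_diagpos {s t : ℕ} (h : s ≤ t) :
    (∀ a b, 0 ≤ fwdAcc A s t a b) ∧ (∀ a, 0 < fwdAcc A s t a a) := by
  induction t, h using Nat.le_induction with
  | base =>
    rw [fwdAcc_self]
    constructor
    · intro a b
      by_cases hab : a = b <;> simp [Matrix.one_apply, hab]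
    · intro a; simp [Matrix.one_apply]
  | succ t ht ih =>
    rw [fwdAcc_succ A ht]
    refine ⟨fun a b => ?_, fun a => ?_⟩
    · rw [Matrix.mul_apply]
      exact Finset.sum_nonneg fun i _ => mul_nonneg (ih.1 a i) (hnonneg t i b)
    · exact mul_entry_pos ih.1 (hnonneg t) (ih.2 a) (hdiag t a)

/-- The zero pattern of `fwdAcc A s t`. -/
noncomputable def pat (s t : ℕ) : Finset (Fin n × Fin n) :=
  Finset.univ.filter fun p => 0 < fwdAcc A s t p.1 p.2

lemma mem_pat {s t : ℕ} {a b : Fin n} :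
    (a, b) ∈ pat A s t ↔ 0 < fwdAcc A s t a b := by
  simp [pat]

include hnonneg hdiag in
lemma pat_mono_t {s t t' : ℕ} (h : s ≤ t) (h' : t ≤ t') :
    pat A s t ⊆ pat A s t' := by
  induction t', h' using Nat.le_induction with
  | base => exact subset_rfl
  | succ u hu ih =>
    refine ih.trans fun p hp => ?_
    obtain ⟨a, b⟩ := p
    rw [mem_pat] at hp ⊢
    rw [fwdAcc_succ A (h.trans hu)]
    exact mul_entry_pos (fwdAcc_nonneg_diagpos A hnonneg hdiag (h.trans hu)).1
      (hnonneg u) hp (hdiag u b)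

include hnonneg hdiag in
lemma pat_anti_s {s s' t : ℕ} (h : s ≤ s') (h' : s' ≤ t) :
    pat A s' t ⊆ pat A s t := by
  intro p hp
  obtain ⟨a, b⟩ := p
  rw [mem_pat] at hp ⊢
  rw [fwdAcc_mul A h h']
  exact mul_entry_pos (fwdAcc_nonneg_diagpos A hnonneg hdiag h).1
    (fwdAcc_nonneg_diagpos A hnonneg hdiag h').1
    ((fwdAcc_nonneg_diagpos A hnonneg hdiag h).2 a) hp

end aux

/-- A monotone (w.r.t. `⊆`) sequence of finsets in a finite type stabilizes. -/
lemma monotone_finset_stab {α : Type*} [Fintype α] [DecidableEq α]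
    (f : ℕ → Finset α) (hf : ∀ k k', k ≤ k' → f k ⊆ f k') :
    ∃ K, ∀ k, K ≤ k → f k = f K := by
  have hbdd : BddAbove (Set.range fun k => (f k).card) := by
    refine ⟨Fintype.card α, ?_⟩
    rintro x ⟨k, rfl⟩
    exact Finset.card_le_univ _
  obtain ⟨K, hK⟩ := Nat.sSup_mem (Set.range_nonempty (fun k => (f k).card)) hbdd
  have hK' : (f K).card = sSup (Set.range fun k => (f k).card) := hK
  refine ⟨K, fun k hk => ?_⟩
  refine (Finset.eq_of_subset_of_card_le (hf K k hk) ?_).symm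
  rw [hK']
  exact le_csSup hbdd ⟨k, rfl⟩

/-- An antitone sequence of finsets stabilizes. -/
lemma antitone_finset_stab {α : Type*} [DecidableEq α]
    (f : ℕ → Finset α) (hf : ∀ k k', k ≤ k' → f k' ⊆ f k) :
    ∃ K, ∀ k, K ≤ k → f k = f K := by
  obtain ⟨K, hK⟩ := Nat.sInf_mem (Set.range_nonempty (fun k => (f k).card))
  have hK' : (f K).card = sInf (Set.range fun k => (f k).card) := hK
  refine ⟨K, fun k hk => ?_⟩
  refine Finset.eq_of_subset_of_card_le (hf K k hk) ?_
  rw [hK']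
  exact Nat.sInf_le ⟨k, rfl⟩

/-- For a sequence of nonnegative matrices with positive diagonals there is a
strictly increasing sequence of times `0 < t 0 < t 1 < ⋯` such that all the
forward accumulations `A(t i, t (i+1))` have the same zero pattern. -/
theorem statement2 {n : ℕ} (A : ℕ → Matrix (Fin n) (Fin n) ℝ)
    (hnonneg : ∀ t i j, 0 ≤ A t i j)
    (hdiag : ∀ t i, 0 < A t i i) :
    ∃ t : ℕ → ℕ, 0 < t 0 ∧ StrictMono t ∧
      ∀ i : ℕ, ∀ a b : Fin n,
        0 < fwdAcc A (t i) (t (i + 1)) a b ↔ 0 < fwdAcc A (t 0) (t 1) a b := by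
  -- stabilization time for each start `s`
  have hstab : ∀ s : ℕ, ∃ T, s ≤ T ∧ ∀ u, T ≤ u → pat A s u = pat A s T := by
    intro s
    obtain ⟨K, hK⟩ := monotone_finset_stab (fun k => pat A s (s + k))
      (fun k k' hk => pat_mono_t A hnonneg hdiag (Nat.le_add_right s k)
        (by omega))
    refine ⟨s + K, Nat.le_add_right s K, fun u hu => ?_⟩
    have := hK (u - s) (by omega)
    rwa [show s + (u - s) = u by omega] at this
  choose T hT1 hT2 using hstab
  -- the limit pattern from start `s`
  set Pinf : ℕ → Finset (Fin n × Fin n) := fun s => pat A s (T s) with hPinf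
  have hPanti : ∀ s s', s ≤ s' → Pinf s' ⊆ Pinf s := by
    intro s s' h
    have h1 : Pinf s' = pat A s' (max (T s) (T s')) := (hT2 s' _ (le_max_right _ _)).symm
    have h2 : Pinf s = pat A s (max (T s) (T s')) := (hT2 s _ (le_max_left _ _)).symm
    rw [h1, h2]
    exact pat_anti_s A hnonneg hdiag h ((hT1 s').trans (le_max_right _ _))
  obtain ⟨s₀, hs₀⟩ := antitone_finset_stab Pinf hPanti
  -- build the time sequence
  set t : ℕ → ℕ := fun i => Nat.rec (max s₀ 1) (fun _ ti => max (T ti) (ti + 1)) i with ht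
  have htsucc : ∀ i, t (i + 1) = max (T (t i)) (t i + 1) := fun i => rfl
  have ht0 : t 0 = max s₀ 1 := rfl
  have hmono : StrictMono t := by
    apply strictMono_nat_of_lt_succ
    intro i
    rw [htsucc]
    omega
  have hge : ∀ i, s₀ ≤ t i := by
    intro i
    induction i with
    | zero => rw [ht0]; omega
    | succ i ih => rw [htsucc]; have := hT1 (t i); omega
  -- each block has pattern `Pinf s₀`
  have hblock : ∀ i, pat A (t i) (t (i + 1)) = Pinf s₀ := by
    intro i
    have h1 : pat A (t i) (t (i + 1)) = Pinf (t i) := by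
      rw [hPinf]
      exact hT2 (t i) (t (i + 1)) (by rw [htsucc]; exact le_max_left _ _)
    rw [h1, hs₀ (t i) (hge i)]
  refine ⟨t, by rw [ht0]; omega, hmono, fun i a b => ?_⟩
  have h0 : pat A (t 0) (t 1) = Pinf s₀ := hblock 0
  rw [← mem_pat, ← mem_pat, hblock i, h0]
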